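/- For every medial quandle Q, the displacement group Dis(Q) is an abelian normal subgroup of β(Q). -/

import Mathlib

open LaurentPolynomial

set_option synthInstance.maxHeartbeats 1000000
set_option maxHeartbeats 1000000

noncomputable section

/-- The ring `Λ = ℤ[t,t⁻¹]` of Laurent polynomials with integer coefficients. -/
abbrev Λ : Type := LaurentPolynomial ℤ

/-- The variable `t ∈ Λ`. -/
abbrev tL : Λ := T 1

/-- A medial quandle structure on a type `Q`: an idempotent binary operation whose right
translations are bijections, satisfying the medial law. -/
structure MedialQuandleStr (Q : Type*) where
  op : Q → Q → Q
  idem : ∀ x, op x x = x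
  bij : ∀ y, Function.Bijective fun x => op x y
  medial : ∀ w x y z, op (op w x) (op y z) = op (op w y) (op x z)

/-- A quandle structure on a type `T`. -/
structure QuandleStr (T : Type*) where
  op : T → T → T
  idem : ∀ x, op x x = x
  bij : ∀ y, Function.Bijective fun x => op x y
  distrib : ∀ x y z, op (op x y) z = op (op x z) (op y z)

namespace MedialQuandleStr

variable {Q : Type*} (s : MedialQuandleStr Q)

/-- The translation `β_y : x ↦ x ▷ y`, as a permutation of `Q`. -/
def β (y : Q) : Equiv.Perm Q := Equiv.ofBijective _ (s.bij y)

/-- `β(Q)`: the subgroup of permutations generated by the translations. -/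
def transGroup : Subgroup (Equiv.Perm Q) := Subgroup.closure (Set.range s.β)

/-- The displacement group `Dis(Q)`, generated by the elementary displacements
`β_y β_z⁻¹`. -/
def Dis : Subgroup (Equiv.Perm Q) :=
  Subgroup.closure {d : Equiv.Perm Q | ∃ y z, d = s.β y * (s.β z)⁻¹}

/-- The orbit of `q`: the smallest subset of `Q` containing `q` and closed under the
action of `β(Q)`. -/
def orbit (q : Q) : Set Q := {x | ∃ g ∈ s.transGroup, g q = x}

end MedialQuandleStr

section Construction

variable {M : Type*} [AddCommGroup M] [Module Λ M] {I : Type*}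

/-- The carrier of the quandle `Q(N,(m_i),(X_i))`: the disjoint union of the quotients
`Q_i = N/X_i`. -/
def QCar (N : Submodule Λ M) (X : I → Submodule Λ ↥N) : Type _ :=
  Σ i : I, ↥N ⧸ X i

/-- The condition `(1-t)·X_i = 0` for all `i`. -/
def annCond (N : Submodule Λ M) (X : I → Submodule Λ ↥N) : Prop :=
  ∀ i, ∀ x ∈ X i, (1 - tL) • (x : ↥N) = 0

/-- Multiplication by `1-t`, descended from `N/X_j` to `N` (well defined since
`(1-t)·X_j = 0`). -/
def oneSubT (N : Submodule Λ M) {X : I → Submodule Λ ↥N} (h : annCond N X) (j : I) :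
    (↥N ⧸ X j) →ₗ[Λ] ↥N :=
  Submodule.liftQ (X j) ((1 - tL) • (LinearMap.id : ↥N →ₗ[Λ] ↥N))
    (fun x hx => by simpa using h j x hx)

/-- The operation of `Q(N,(m_i),(X_i))`: for `x ∈ Q_i` and `y ∈ Q_j`,
`x ▷ y = m_j - m_i + t·x + (1-t)·y + X_i ∈ Q_i`. -/
def qop (N : Submodule Λ M) (m : I → M) {X : I → Submodule Λ ↥N}
    (hm : ∀ i j, m i - m j ∈ N) (h : annCond N X) :
    QCar N X → QCar N X → QCar N X :=
  fun x y =>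
    ⟨x.1, Submodule.Quotient.mk (⟨m y.1 - m x.1, hm y.1 x.1⟩ : ↥N)
        + tL • x.2 + Submodule.Quotient.mk (oneSubT N h y.1 y.2)⟩

end Construction

/-- For every medial quandle `Q`, the displacement group `Dis(Q)` is an
abelian subgroup of `β(Q)` which is normal in `β(Q)`. -/
theorem stmt3 {Q : Type*} (s : MedialQuandleStr Q) :
    (∀ d₁ ∈ s.Dis, ∀ d₂ ∈ s.Dis, d₁ * d₂ = d₂ * d₁) ∧
    s.Dis ≤ s.transGroup ∧
    (∀ g ∈ s.transGroup, ∀ d ∈ s.Dis, g * d * g⁻¹ ∈ s.Dis) := by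
  -- basic evaluation
  have hβ : ∀ (y x : Q), s.β y x = s.op x y := fun _ _ => rfl
  -- translated medial law: key equation E
  have hE : ∀ x y z, s.β (s.op y z) * s.β x = s.β (s.op x z) * s.β y := by
    intro x y z
    ext w
    simp only [Equiv.Perm.mul_apply, hβ]
    exact s.medial w x y z
  -- conjugation: β (x ▷ z) = β z * β x * (β z)⁻¹
  have hC : ∀ x z, s.β (s.op x z) = s.β z * s.β x * (s.β z)⁻¹ := by
    intro x z
    have h := hE x z z
    rw [s.idem] at h
    exact eq_mul_inv_of_mul_eq h.symm
  -- key identity K : β z * (β b)⁻¹ * β a * (β z)⁻¹ = β a * (β b)⁻¹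
  have hK : ∀ a b z, s.β z * (s.β b)⁻¹ * s.β a * (s.β z)⁻¹ = s.β a * (s.β b)⁻¹ := by
    intro a b z
    have h := hE b a z
    rw [hC a z, hC b z] at h
    -- h : β z * β a * (β z)⁻¹ * β b = β z * β b * (β z)⁻¹ * β a
    have h2 : s.β a * (s.β z)⁻¹ * s.β b = s.β b * (s.β z)⁻¹ * s.β a := by
      have := congrArg (fun g => (s.β z)⁻¹ * g) h
      simpa [mul_assoc] using this
    have h3 : (s.β b)⁻¹ * s.β a * (s.β z)⁻¹ = (s.β z)⁻¹ * s.β a * (s.β b)⁻¹ := by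
      have := congrArg (fun g => (s.β b)⁻¹ * g * (s.β b)⁻¹) h2
      simpa [mul_assoc] using this
    have := congrArg (fun g => s.β z * g) h3
    simpa [mul_assoc] using this
  -- commutation of generators
  have hgen : ∀ a b c d,
      (s.β a * (s.β b)⁻¹) * (s.β c * (s.β d)⁻¹) = (s.β c * (s.β d)⁻¹) * (s.β a * (s.β b)⁻¹) := by
    intro a b c d
    set u := (s.β b)⁻¹ * s.β a with hu
    set v := (s.β d)⁻¹ * s.β c with hv
    have hKu : ∀ z, s.β z * u * (s.β z)⁻¹ = s.β a * (s.β b)⁻¹ := by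
      intro z; rw [hu, ← mul_assoc]; exact hK a b z
    have hKv : ∀ z, s.β z * v * (s.β z)⁻¹ = s.β c * (s.β d)⁻¹ := by
      intro z; rw [hv, ← mul_assoc]; exact hK c d z
    have huv : u * v = v * u := by
      have e1 : s.β c * u * (s.β c)⁻¹ = s.β d * u * (s.β d)⁻¹ := by
        rw [hKu c, hKu d]
      have e2 : (s.β d)⁻¹ * (s.β c * u * (s.β c)⁻¹) * s.β c
          = (s.β d)⁻¹ * (s.β d * u * (s.β d)⁻¹) * s.β c := by rw [e1]
      calc u * v = (s.β d)⁻¹ * (s.β d * u * (s.β d)⁻¹) * s.β c := by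
            rw [hv]; group
        _ = (s.β d)⁻¹ * (s.β c * u * (s.β c)⁻¹) * s.β c := by rw [e1]
        _ = v * u := by rw [hv]; group
    calc (s.β a * (s.β b)⁻¹) * (s.β c * (s.β d)⁻¹)
        = (s.β a * u * (s.β a)⁻¹) * (s.β a * v * (s.β a)⁻¹) := by rw [hKu a, hKv a]
      _ = s.β a * (u * v) * (s.β a)⁻¹ := by group
      _ = s.β a * (v * u) * (s.β a)⁻¹ := by rw [huv]
      _ = (s.β a * v * (s.β a)⁻¹) * (s.β a * u * (s.β a)⁻¹) := by group
      _ = (s.β c * (s.β d)⁻¹) * (s.β a * (s.β b)⁻¹) := by rw [hKu a, hKv a]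
  -- abelian
  have hab : ∀ d₁ ∈ s.Dis, ∀ d₂ ∈ s.Dis, d₁ * d₂ = d₂ * d₁ := by
    intro d₁ h₁ d₂ h₂
    have key : s.Dis ≤ Subgroup.centralizer (s.Dis : Set (Equiv.Perm Q)) := by
      rw [MedialQuandleStr.Dis, Subgroup.closure_le]
      rintro g ⟨y, z, rfl⟩
      rw [SetLike.mem_coe, Subgroup.mem_centralizer_iff]
      intro h hh
      have : h ∈ Subgroup.centralizer {s.β y * (s.β z)⁻¹} := by
        revert hh
        have : s.Dis ≤ Subgroup.centralizer {s.β y * (s.β z)⁻¹} := by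
          rw [MedialQuandleStr.Dis, Subgroup.closure_le]
          rintro g' ⟨c, d, rfl⟩
          rw [SetLike.mem_coe, Subgroup.mem_centralizer_iff]
          rintro k rfl
          exact hgen y z c d
        exact fun hh => this hh
      rw [Subgroup.mem_centralizer_iff] at this
      exact (this _ rfl).symm
    have := key h₂
    rw [Subgroup.mem_centralizer_iff] at this
    exact this d₁ h₁
  refine ⟨hab, ?_, ?_⟩
  · -- Dis ≤ transGroup
    rw [MedialQuandleStr.Dis, Subgroup.closure_le]
    rintro g ⟨y, z, rfl⟩
    have hy : s.β y ∈ s.transGroup := Subgroup.subset_closure ⟨y, rfl⟩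
    have hz : s.β z ∈ s.transGroup := Subgroup.subset_closure ⟨z, rfl⟩
    exact mul_mem hy (inv_mem hz)
  · -- normality
    intro g hg d hd
    -- first: conjugation formula for all g in transGroup
    have hP : ∀ a : Q, g * s.β a * g⁻¹ = s.β (g a) := by
      have : ∀ a : Q, g * s.β a * g⁻¹ = s.β (g a) := by
        refine Subgroup.closure_induction (k := Set.range s.β)
          (p := fun g _ => ∀ a : Q, g * s.β a * g⁻¹ = s.β (g a)) ?_ ?_ ?_ ?_ hg
        · rintro x ⟨z, rfl⟩ a
          rw [← hC a z]
          exact congrArg s.β (hβ z a).symm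
        · intro a; simp
        · intro x y hx hy ihx ihy a
          have : x * y * s.β a * (x * y)⁻¹ = x * (y * s.β a * y⁻¹) * x⁻¹ := by group
          rw [this, ihy a, ihx (y a)]
          rfl
        · intro x hx ihx a
          have h1 := ihx (x⁻¹ a)
          have h2 : s.β (x (x⁻¹ a)) = s.β a := by rw [← Equiv.Perm.mul_apply, mul_inv_cancel, Equiv.Perm.one_apply]
          rw [h2] at h1
          rw [← h1]; group
      exact this
    -- then conjugate Dis into Dis
    refine Subgroup.closure_induction
      (p := fun d _ => g * d * g⁻¹ ∈ s.Dis) ?_ ?_ ?_ ?_ hd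
    · rintro x ⟨y, z, rfl⟩
      have : g * (s.β y * (s.β z)⁻¹) * g⁻¹ = (g * s.β y * g⁻¹) * (g * s.β z * g⁻¹)⁻¹ := by
        group
      rw [this, hP y, hP z]
      exact Subgroup.subset_closure ⟨g y, g z, rfl⟩
    · simpa using one_mem s.Dis
    · intro x y hx hy ihx ihy
      have : g * (x * y) * g⁻¹ = (g * x * g⁻¹) * (g * y * g⁻¹) := by group
      rw [this]; exact mul_mem ihx ihy
    · intro x hx ihx
      have : g * x⁻¹ * g⁻¹ = (g * x * g⁻¹)⁻¹ := by group
      rw [this]; exact inv_mem ihx
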